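/- Every hereditarily irresolvable topological space is T_D: if no non-empty subspace of X admits two disjoint dense subsets, then the derived set of every singleton in X is closed. -/

import Mathlib

lemma derivedSet_singleton_eq {X : Type*} [TopologicalSpace X] (x : X) :
    derivedSet ({x} : Set X) = closure {x} \ {x} := by
  ext y
  rw [mem_derivedSet, accPt_principal_iff_clusterPt, ← mem_closure_iff_clusterPt]
  constructor
  · intro h
    rcases eq_or_ne y x with rfl | hne
    · simp at h
    · refine ⟨closure_mono (Set.diff_subset) h, hne⟩
  · rintro ⟨h1, h2⟩
    have : ({x} : Set X) \ {y} = {x} := by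
      ext z; simp only [Set.mem_diff, Set.mem_singleton_iff]
      constructor
      · exact fun h => h.1
      · rintro rfl; exact ⟨rfl, fun h => h2 (h ▸ rfl)⟩
    rw [this]; exact h1

/-- Every hereditarily irresolvable space is T_D. -/
theorem hereditarily_irresolvable_TD {X : Type*} [TopologicalSpace X]
    (hHI : ∀ Y : Set X, Y.Nonempty →
      ¬ ∃ A B : Set X, A ⊆ Y ∧ B ⊆ Y ∧ Disjoint A B ∧ Y ⊆ closure A ∧ Y ⊆ closure B) :
    ∀ x : X, IsClosed (derivedSet ({x} : Set X)) := by
  intro x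
  rw [derivedSet_singleton_eq]
  set D : Set X := closure {x} \ {x} with hD
  have hxD : x ∉ closure D := by
    intro hx
    apply hHI (closure {x}) ⟨x, subset_closure rfl⟩
    refine ⟨{x}, D, subset_closure, Set.diff_subset, ?_, subset_rfl, ?_⟩
    · simp [hD, Set.disjoint_left]
    · have : closure ({x} : Set X) ⊆ closure D :=
        closure_minimal (by simpa using hx) isClosed_closure
      exact this
  have : closure D = D := by
    apply subset_antisymm _ subset_closure
    intro y hy
    refine ⟨(closure_minimal Set.diff_subset isClosed_closure) hy, ?_⟩
    rintro rfl; exact hxD hy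
  rw [← this]; exact isClosed_closure
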